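/- Let E = ((N_t, q_t))_{t∈[m]} be a request sequence that has no inactive edges under the water-filling allocation, and let (h_t)_{t∈[m]} be the water-filling heights of its online nodes. Then the neighbors of each offline node appear in order of strictly increasing height: for every offline node i and all t, s with i ∈ N_t, i ∈ N_s, and t < s, we have h_t < h_s. -/

import Mathlib

open Finset MeasureTheory

/-- A request sequence with `n` offline nodes and `m` online nodes: each online
node `t` has a nonempty neighborhood `N t ⊆ [n]` and a positive quantity `q t`. -/
structure ReqSeq (n m : ℕ) where
  N : Fin m → Finset (Fin n)
  q : Fin m → ℝ
  N_nonempty : ∀ t, (N t).Nonempty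
  q_pos : ∀ t, 0 < q t

/-- `Δ(N, q)`: feasible allocations for a single online node. -/
def allocSet (n : ℕ) (N : Finset (Fin n)) (qt : ℝ) : Set (Fin n → ℝ) :=
  {x | (∀ i, 0 ≤ x i) ∧ (∀ i, i ∉ N → x i = 0) ∧ ∑ i, x i = qt}

/-- A feasible allocation trajectory on a request sequence. -/
def Feasible {n m : ℕ} (E : ReqSeq n m) (x : Fin m → Fin n → ℝ) : Prop :=
  ∀ t, x t ∈ allocSet n (E.N t) (E.q t)

/-- `Δ(E)`: the Minkowski sum of the per-node allocation sets (feasible load vectors). -/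
def loads {n m : ℕ} (E : ReqSeq n m) : Set (Fin n → ℝ) :=
  {ℓ | ∃ x, Feasible E x ∧ ℓ = ∑ t, x t}

/-- Sum of the `k` largest entries of `x`. -/
noncomputable def topSum {n : ℕ} (x : Fin n → ℝ) (k : ℕ) : ℝ :=
  sSup ((fun s : Finset (Fin n) => ∑ i ∈ s, x i) '' {s | s.card = k})

/-- `Majorizes x y` means `x ⪰ y`: equal total sums and every `k`-largest-entries
sum of `x` dominates that of `y`. -/
def Majorizes {n : ℕ} (x y : Fin n → ℝ) : Prop :=
  (∑ i, x i = ∑ i, y i) ∧ ∀ k ≤ n, topSum y k ≤ topSum x k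

/-- `f` is Schur-concave on the nonnegative orthant: `x ⪯ y → f x ≥ f y`. -/
def SchurConcave {n : ℕ} (f : (Fin n → ℝ) → ℝ) : Prop :=
  ∀ x y : Fin n → ℝ, (∀ i, 0 ≤ x i) → (∀ i, 0 ≤ y i) → Majorizes y x → f y ≤ f x

/-- `g` is Schur-convex on the nonnegative orthant: `x ⪯ y → g x ≤ g y`. -/
def SchurConvex {n : ℕ} (g : (Fin n → ℝ) → ℝ) : Prop :=
  ∀ x y : Fin n → ℝ, (∀ i, 0 ≤ x i) → (∀ i, 0 ≤ y i) → Majorizes y x → g x ≤ g y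

/-- Cumulative load strictly before online node `t`. -/
def prevLoad {n m : ℕ} (x : Fin m → Fin n → ℝ) (t : Fin m) : Fin n → ℝ :=
  fun i => ∑ s ∈ Finset.univ.filter (fun s => s < t), x s i

/-- Minimum of `v` over the neighborhood of online node `t`. -/
noncomputable def nbhdMinOn {n m : ℕ} (E : ReqSeq n m) (t : Fin m) (v : Fin n → ℝ) : ℝ :=
  (E.N t).inf' (E.N_nonempty t) v

/-- `x` is the water-filling allocation trajectory on `E`: at each arrival `t`,
`x t` maximizes the minimum post-allocation load over `N t`. -/
def IsWFAlloc {n m : ℕ} (E : ReqSeq n m) (x : Fin m → Fin n → ℝ) : Prop :=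
  Feasible E x ∧
  ∀ t, ∀ y ∈ allocSet n (E.N t) (E.q t),
    nbhdMinOn E t (fun i => y i + prevLoad x t i) ≤ nbhdMinOn E t (fun i => x t i + prevLoad x t i)

-- The load vector produced by water-filling (via choice; the trajectory exists and is unique).
open Classical in
noncomputable def wfLoad {n m : ℕ} (E : ReqSeq n m) : Fin n → ℝ :=
  if h : ∃ x, IsWFAlloc E x then ∑ t, h.choose t else 0

/-- `ℓ` is the majorization-minimal element of `Δ(E)`. -/
def IsOpt {n m : ℕ} (E : ReqSeq n m) (ℓ : Fin n → ℝ) : Prop :=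
  ℓ ∈ loads E ∧ ∀ ℓ' ∈ loads E, Majorizes ℓ' ℓ

-- `OPT(E)`, the majorization-minimal feasible load vector (via choice).
open Classical in
noncomputable def optLoad {n m : ℕ} (E : ReqSeq n m) : Fin n → ℝ :=
  if h : ∃ ℓ, IsOpt E ℓ then h.choose else 0

/-- A request sequence is nested if `N 1 ⊇ N 2 ⊇ ⋯ ⊇ N m`. -/
def IsNested {n m : ℕ} (E : ReqSeq n m) : Prop :=
  ∀ s t : Fin m, s ≤ t → E.N t ⊆ E.N s

/-- `E_{n,m,q}`: request sequences with total quantity `q`. -/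
def seqs (n m : ℕ) (q : ℝ) : Set (ReqSeq n m) := {E | ∑ t, E.q t = q}

/-- The harmonic-series matrix applied to a vector: `(Hℓ)(i) = Σ_{j ≤ i} ℓ(j)/(n − j + 1)`
(in 1-indexed notation). -/
noncomputable def Hvec (n : ℕ) (ℓ : Fin n → ℝ) : Fin n → ℝ :=
  fun i => ∑ j ∈ Finset.univ.filter (fun j => j ≤ i), ℓ j / ((n - (j : ℕ) : ℕ) : ℝ)

/-- The water-filling height of online node `t`: the common post-allocation load of
the offline nodes in the support of `x t`. -/
noncomputable def height {n m : ℕ} (x : Fin m → Fin n → ℝ) (t : Fin m) : ℝ :=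
  sSup {c | ∃ i, 0 < x t i ∧ c = x t i + prevLoad x t i}


/-- At a water-filling step, every supported offline node has post-allocation load
equal to the minimum over the neighborhood. -/
lemma post_eq_minOn {n m : ℕ} (E : ReqSeq n m) (x : Fin m → Fin n → ℝ)
    (hx : IsWFAlloc E x) (t : Fin m) (i : Fin n) (hi : i ∈ E.N t) (hpos : 0 < x t i) :
    x t i + prevLoad x t i = nbhdMinOn E t (fun j => x t j + prevLoad x t j) := by
  classical
  set M := nbhdMinOn E t (fun j => x t j + prevLoad x t j) with hM
  obtain ⟨hnn, hz, hsum⟩ := hx.1 t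
  have hMle : M ≤ x t i + prevLoad x t i := Finset.inf'_le _ hi
  by_contra hne
  have hlt : M < x t i + prevLoad x t i := lt_of_le_of_ne hMle (fun h => hne h.symm)
  -- there is a node achieving the min, and it differs from i
  obtain ⟨j0, hj0, hj0M⟩ := Finset.exists_mem_eq_inf' (E.N_nonempty t)
      (fun j => x t j + prevLoad x t j)
  have hj0i : j0 ≠ i := by
    intro h; rw [h] at hj0M; exact hne hj0M.symm
  have hj0' : j0 ∈ (E.N t).erase i := Finset.mem_erase.mpr ⟨hj0i, hj0⟩
  set k := ((E.N t).erase i).card with hk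
  have hk0 : 0 < k := Finset.card_pos.mpr ⟨j0, hj0'⟩
  have hkR : (0 : ℝ) < (k : ℝ) := by exact_mod_cast hk0
  set ε := min (x t i) (x t i + prevLoad x t i - M) / 2 with hε
  have hε0 : 0 < ε := by
    apply div_pos _ (by norm_num)
    exact lt_min hpos (by linarith)
  have hεlt : ε < x t i := by
    have : min (x t i) (x t i + prevLoad x t i - M) ≤ x t i := min_le_left _ _
    rw [hε]; linarith
  have hεlt2 : ε < x t i + prevLoad x t i - M := by
    have : min (x t i) (x t i + prevLoad x t i - M) ≤ x t i + prevLoad x t i - M :=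
      min_le_right _ _
    rw [hε]; linarith
  set δ : Fin n → ℝ := fun j => if j = i then -ε else if j ∈ E.N t then ε / k else 0 with hδ
  set y : Fin n → ℝ := fun j => x t j + δ j with hy
  have hδsum : ∑ j, δ j = 0 := by
    have h1 : ∑ j, δ j = ∑ j ∈ E.N t, δ j := by
      refine (Finset.sum_subset (Finset.subset_univ _) ?_).symm
      intro j _ hj
      have hji : j ≠ i := by rintro rfl; exact hj hi
      simp only [hδ, if_neg hji, if_neg hj]
    have h2 : ∑ j ∈ (E.N t).erase i, δ j + δ i = ∑ j ∈ E.N t, δ j :=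
      Finset.sum_erase_add _ _ hi
    have h3 : ∑ j ∈ (E.N t).erase i, δ j = k * (ε / k) := by
      have hc : ∀ j ∈ (E.N t).erase i, δ j = ε / k := by
        intro j hj
        obtain ⟨hji, hjN⟩ := Finset.mem_erase.mp hj
        simp only [hδ, if_neg hji, if_pos hjN]
      rw [Finset.sum_congr rfl hc, Finset.sum_const, nsmul_eq_mul]
    have h4 : δ i = -ε := by simp [hδ]
    rw [h1, ← h2, h3, h4]
    field_simp
    ring
  have hyfeas : y ∈ allocSet n (E.N t) (E.q t) := by
    refine ⟨fun j => ?_, fun j hj => ?_, ?_⟩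
    · simp only [hy, hδ]
      by_cases hji : j = i
      · subst hji; rw [if_pos rfl]; linarith
      · rw [if_neg hji]
        by_cases hjN : j ∈ E.N t
        · rw [if_pos hjN]
          exact add_nonneg (hnn j) (le_of_lt (div_pos hε0 hkR))
        · rw [if_neg hjN]; have := hnn j; linarith
    · have hji : j ≠ i := fun h => hj (h ▸ hi)
      simp only [hy, hδ]
      rw [if_neg hji, if_neg hj, hz j hj]; ring
    · simp only [hy]
      rw [Finset.sum_add_distrib, hδsum, hsum]; ring
  have hmin : M < nbhdMinOn E t (fun j => y j + prevLoad x t j) := by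
    rw [nbhdMinOn, Finset.lt_inf'_iff]
    intro j hj
    by_cases hji : j = i
    · subst hji
      simp only [hy, hδ, eq_self_iff_true, if_true]
      linarith
    · have : M ≤ x t j + prevLoad x t j := Finset.inf'_le _ hj
      simp only [hy, hδ]
      rw [if_neg hji, if_pos hj]
      have : 0 < ε / k := div_pos hε0 hkR
      linarith
  have := hx.2 t y hyfeas
  rw [← hM] at this
  exact absurd (lt_of_lt_of_le hmin this) (lt_irrefl M)

/-- When all edges are active, the height equals the common minimum post-load. -/
lemma height_eq_minOn {n m : ℕ} (E : ReqSeq n m) (x : Fin m → Fin n → ℝ)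
    (hx : IsWFAlloc E x) (hactive : ∀ t, ∀ i ∈ E.N t, 0 < x t i) (t : Fin m) :
    height x t = nbhdMinOn E t (fun j => x t j + prevLoad x t j) := by
  set M := nbhdMinOn E t (fun j => x t j + prevLoad x t j) with hM
  have hS : {c | ∃ i, 0 < x t i ∧ c = x t i + prevLoad x t i} = {M} := by
    ext c
    simp only [Set.mem_setOf_eq, Set.mem_singleton_iff]
    constructor
    · rintro ⟨i, hpos, rfl⟩
      have hi : i ∈ E.N t := by
        by_contra h
        rw [(hx.1 t).2.1 i h] at hpos
        exact lt_irrefl 0 hpos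
      exact post_eq_minOn E x hx t i hi hpos
    · rintro rfl
      obtain ⟨i, hi⟩ := E.N_nonempty t
      exact ⟨i, hactive t i hi, (post_eq_minOn E x hx t i hi (hactive t i hi)).symm⟩
  rw [height, hS, csSup_singleton]

/-- **Observation (Monotone Neighborhoods).** If a request sequence has no inactive edges
under its water-filling allocation, then the neighbors of each offline node arrive in
strictly increasing order of water-filling height. -/
theorem monotone_neighborhoods (n m : ℕ) (E : ReqSeq n m)
    (x : Fin m → Fin n → ℝ) (hx : IsWFAlloc E x)
    (hactive : ∀ t, ∀ i ∈ E.N t, 0 < x t i) :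
    ∀ (i : Fin n) (t s : Fin m), i ∈ E.N t → i ∈ E.N s → t < s →
      height x t < height x s := by
  intro i t s hit his hts
  have hposts : height x s = x s i + prevLoad x s i := by
    rw [height_eq_minOn E x hx hactive s]
    exact (post_eq_minOn E x hx s i his (hactive s i his)).symm
  have hpostt : height x t = x t i + prevLoad x t i := by
    rw [height_eq_minOn E x hx hactive t]
    exact (post_eq_minOn E x hx t i hit (hactive t i hit)).symm
  have h1 : x t i + prevLoad x t i = ∑ r ∈ Finset.univ.filter (fun r => r ≤ t), x r i := by
    have hset : Finset.univ.filter (fun r => r ≤ t)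
        = insert t (Finset.univ.filter (fun r => r < t)) := by
      ext r
      simp only [Finset.mem_filter, Finset.mem_univ, true_and, Finset.mem_insert]
      exact le_iff_eq_or_lt
    rw [hset, Finset.sum_insert (by simp)]
    rfl
  have h2 : ∑ r ∈ Finset.univ.filter (fun r => r ≤ t), x r i ≤ prevLoad x s i := by
    apply Finset.sum_le_sum_of_subset_of_nonneg
    · intro r hr
      simp only [Finset.mem_filter, Finset.mem_univ, true_and] at hr ⊢
      exact lt_of_le_of_lt hr hts
    · intro r _ _
      exact (hx.1 r).1 i
  have h3 : 0 < x s i := hactive s i his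
  rw [hposts, hpostt]
  calc x t i + prevLoad x t i ≤ prevLoad x s i := by rw [h1]; exact h2
    _ < x s i + prevLoad x s i := by linarith
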